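/- Let D be a ghost-free diagram in which every column contains at most one cell. Then MaxG(D) ≤ sf(D). -/

import Mathlib

open Finset

/-- A diagram: a finite set of cells in ℕ×ℕ (recorded as (row, column)),
some of which may be marked as ghost cells. -/
structure Diagram where
  cells : Finset (ℕ × ℕ)
  ghosts : Finset (ℕ × ℕ)
deriving DecidableEq

/-- `(r,c)` is the rightmost cell (ghost or not) in row `r` of `D`. -/
def Rightmost (D : Diagram) (r c : ℕ) : Prop :=
  (r, c) ∈ D.cells ∧ ∀ c' > c, (r, c') ∉ D.cells

/-- A nontrivial K-Kohnert move at row `r` of `D` is possible, taking the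
rightmost cell `(r,c)` of row `r` (a non-ghost cell) down to the highest empty
position `(rhat, c)` below it in column `c`, with no ghost cell in between. -/
def KohnertMovable (D : Diagram) (r c rhat : ℕ) : Prop :=
  Rightmost D r c ∧ (r, c) ∉ D.ghosts ∧
  1 ≤ rhat ∧ rhat < r ∧ (rhat, c) ∉ D.cells ∧
  ∀ r', rhat < r' → r' < r → (r', c) ∈ D.cells ∧ (r', c) ∉ D.ghosts

/-- Result of a Kohnert move: the cell `(r,c)` moves to `(rhat,c)`. -/
def applyKohnert (D : Diagram) (r c rhat : ℕ) : Diagram :=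
  ⟨insert (rhat, c) (D.cells.erase (r, c)), D.ghosts⟩

/-- Result of a ghost move: the cell `(r,c)` moves to `(rhat,c)`, leaving a
ghost cell at `(r,c)`. -/
def applyGhost (D : Diagram) (r c rhat : ℕ) : Diagram :=
  ⟨insert (rhat, c) D.cells, insert (r, c) D.ghosts⟩

/-- One (nontrivial) K-Kohnert move. -/
def KStep (D T : Diagram) : Prop :=
  ∃ r c rhat, KohnertMovable D r c rhat ∧
    (T = applyKohnert D r c rhat ∨ T = applyGhost D r c rhat)

/-- One (nontrivial) ghost move. -/
def GStep (D T : Diagram) : Prop :=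
  ∃ r c rhat, KohnertMovable D r c rhat ∧ T = applyGhost D r c rhat

/-- All diagrams obtainable from `D` by sequences of K-Kohnert moves. -/
def KKD (D : Diagram) : Set Diagram := {T | Relation.ReflTransGen KStep D T}

/-- All diagrams obtainable from `D` by sequences of ghost moves. -/
def GKD (D : Diagram) : Set Diagram := {T | Relation.ReflTransGen GStep D T}

/-- Maximum number of ghost cells over `KKD D`. -/
noncomputable def MaxG (D : Diagram) : ℕ :=
  sSup {n | ∃ T ∈ KKD D, T.ghosts.card = n}

/-- Maximum number of ghost cells over `GKD D`. -/
noncomputable def MaxGhat (D : Diagram) : ℕ :=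
  sSup {n | ∃ T ∈ GKD D, T.ghosts.card = n}

/-- Dark clouds of a ghost-free diagram: working from the top row down, mark in
each row the rightmost cell having no marked cell above it in its column. -/
def dark (D : Finset (ℕ × ℕ)) : Finset (ℕ × ℕ) :=
  ((List.range (D.sup Prod.fst + 1)).reverse).foldl
    (fun acc r =>
      let cand := (D.filter (fun p => p.1 = r ∧ ∀ q ∈ acc, q.2 ≠ p.2)).image Prod.snd
      if h : cand.Nonempty then insert (r, cand.max' h) acc else acc) ∅

/-- Snowflakes of the snow diagram: empty positions lying below a dark cloud
in its column. -/
def snowflakes (D : Finset (ℕ × ℕ)) : Finset (ℕ × ℕ) :=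
  ((Finset.range (D.sup Prod.fst + 1)) ×ˢ (D.image Prod.snd)).filter
    (fun p => 1 ≤ p.1 ∧ p ∉ D ∧ ∃ q ∈ dark D, q.2 = p.2 ∧ p.1 < q.1)

/-- Number of snowflakes of the snow diagram of a ghost-free diagram. -/
def sf (D : Finset (ℕ × ℕ)) : ℕ := (snowflakes D).card

/-- A generalized skew diagram: each nonempty row is a contiguous run of cells,
and both leftmost and rightmost columns weakly increase with the row index. -/
def IsGenSkew (D : Finset (ℕ × ℕ)) : Prop :=
  (∀ p ∈ D, 1 ≤ p.1 ∧ 1 ≤ p.2) ∧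
  (∀ r c₁ c c₂, (r, c₁) ∈ D → (r, c₂) ∈ D → c₁ ≤ c → c ≤ c₂ → (r, c) ∈ D) ∧
  (∀ r₁ r₂ c₁, r₁ < r₂ → (r₁, c₁) ∈ D → (∃ c, (r₂, c) ∈ D) →
      ∃ c₂, c₁ ≤ c₂ ∧ (r₂, c₂) ∈ D) ∧
  (∀ r₁ r₂ c₂, r₁ < r₂ → (r₂, c₂) ∈ D → (∃ c, (r₁, c) ∈ D) →
      ∃ c₁, c₁ ≤ c₂ ∧ (r₁, c₁) ∈ D)

/-- `Key(D)`: the minimal key diagram containing `D`. -/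
def keyOf (D : Finset (ℕ × ℕ)) : Finset (ℕ × ℕ) :=
  D.biUnion (fun p => (Finset.Icc 1 p.2).image (fun c => (p.1, c)))

/-- Largest index `i < j` (0-indexed) with `α_i > 0`. -/
def prevIdx (α : List ℕ) (j : ℕ) : Option ℕ :=
  ((List.range j).filter (fun i => 0 < α.getD i 0)).max?

/-- Contribution of step 2 of the skew-diagram construction at (0-indexed) row `j`. -/
def step2contrib (α : List ℕ) (j : ℕ) : ℕ :=
  if 0 < α.getD j 0 then
    match prevIdx α j with
    | none => 0
    | some i => α.getD i 0 - α.getD j 0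
  else 0

/-- Total rightward shift of (0-indexed) row `k` in the skew-diagram construction. -/
def rowShift (α : List ℕ) (k : ℕ) : ℕ :=
  (∑ j ∈ Finset.range (k + 1), step2contrib α j) +
    ((List.range k).filter (fun i => α.getD i 0 = 0)).length

/-- The skew diagram `S(α)` of a weak composition `α`. -/
def skewDiagram (α : List ℕ) : Finset (ℕ × ℕ) :=
  (Finset.range α.length).biUnion (fun i =>
    (Finset.Icc 1 (α.getD i 0)).image (fun c => (i + 1, c + rowShift α i)))

/-- The lock diagram of a weak composition `α`: `α_i` right-justified cells in row `i`. -/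
def lockDiagram (α : List ℕ) : Finset (ℕ × ℕ) :=
  (Finset.range α.length).biUnion (fun i =>
    (Finset.range (α.getD i 0)).image (fun j => (i + 1, α.foldr max 0 - j)))

/-- `L` is a lock-tableau labeling of content `α` on the given set of cells. -/
def IsLockLabeling (α : List ℕ) (cells : Finset (ℕ × ℕ)) (L : ℕ × ℕ → ℕ) : Prop :=
  (∀ p ∈ cells, 1 ≤ L p ∧ L p ≤ α.length) ∧
  (∀ j, 1 ≤ j → j ≤ α.length → 0 < α.getD (j - 1) 0 →
    ∀ c, α.foldr max 0 - α.getD (j - 1) 0 + 1 ≤ c → c ≤ α.foldr max 0 →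
      ∃! p, p ∈ cells ∧ p.2 = c ∧ L p = j) ∧
  (∀ p ∈ cells, p.1 ≤ L p) ∧
  (∀ p ∈ cells, ∀ q ∈ cells, L p = L q → p.2 < q.2 → q.1 ≤ p.1) ∧
  (∀ p ∈ cells, ∀ q ∈ cells, p.2 = q.2 → p.1 < q.1 → L p < L q)

/-- Label of the position `(r,c)` of `T`: for a ghost cell, the label of the
highest non-ghost cell weakly below it in column `c`. -/
def ghostLabel (T : Diagram) (L : ℕ × ℕ → ℕ) (r c : ℕ) : ℕ :=
  L (((T.cells \ T.ghosts).filter (fun p => p.2 = c ∧ p.1 ≤ r)).sup Prod.fst, c)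

/-- The labels, within one column with row set `Rc`, of the modified snow
diagram, where `U` is the set of rows occupied in later columns; rows are
processed from top to bottom. -/
def colLabelList (Rc U : Finset ℕ) : List (ℕ × ℕ) :=
  ((Rc.sort (· ≤ ·)).reverse).foldl
    (fun acc r =>
      if r ∈ U then (r, r) :: acc
      else
        let cand := U.filter (fun s => s < r ∧ ∀ q ∈ acc, q.2 ≠ s)
        if h : cand.Nonempty then (r, cand.max' h) :: acc else (r, 1) :: acc)
    []

/-- The label of a cell `p ∈ D` in the modified snow diagram `snow-hat(D)`. -/
def hatLabel (D : Finset (ℕ × ℕ)) (p : ℕ × ℕ) : ℕ :=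
  ((colLabelList ((D.filter (fun q => q.2 = p.2)).image Prod.fst)
      ((D.filter (fun q => p.2 < q.2)).image Prod.fst)).lookup p.1).getD 0

/-- Number of snowflakes of the modified snow diagram `snow-hat(D)`. -/
def sfhat (D : Finset (ℕ × ℕ)) : ℕ :=
  (((Finset.range (D.sup Prod.fst + 1)) ×ˢ (D.image Prod.snd)).filter
    (fun p => 1 ≤ p.1 ∧ p ∉ D ∧
      ∃ q ∈ D, q.2 = p.2 ∧ p.1 < q.1 ∧ hatLabel D q ≤ p.1)).card

/-- Cells of `D` that are rightmost in their row. -/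
def rmostCells (D : Finset (ℕ × ℕ)) : Finset (ℕ × ℕ) :=
  D.filter (fun p => ∀ q ∈ D, q.1 = p.1 → q.2 ≤ p.2)

/-- `S(D)`: cells that are not rightmost in their row and such that no cell
above them in their column is rightmost in its row. -/
def SofD (D : Finset (ℕ × ℕ)) : Finset (ℕ × ℕ) :=
  D.filter (fun p => p ∉ rmostCells D ∧
    ∀ q ∈ D, q.2 = p.2 → p.1 < q.1 → q ∉ rmostCells D)

/-- Restriction of `D` to the columns in `C`. -/
def Res (D : Finset (ℕ × ℕ)) (C : Finset ℕ) : Finset (ℕ × ℕ) :=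
  D.filter (fun p => p.2 ∈ C)

open Classical in
/-- The ghost move at row `r`, as a function (identity when no move is possible). -/
noncomputable def gmove (T : Diagram) (r : ℕ) : Diagram :=
  if h : ∃ p : ℕ × ℕ, KohnertMovable T r p.1 p.2 then
    applyGhost T r h.choose.1 h.choose.2
  else T

namespace Stmt8

/-- Columns of row `r` of `D`. -/
def maxcolS (D : Finset (ℕ × ℕ)) (r : ℕ) : Finset ℕ :=
  (D.filter (fun q => q.1 = r)).image Prod.snd

/-- Largest column of row `r` of `D`. -/
def maxcol (D : Finset (ℕ × ℕ)) (r : ℕ) : ℕ :=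
  if h : (maxcolS D r).Nonempty then (maxcolS D r).max' h else 0

lemma mem_maxcolS {D : Finset (ℕ × ℕ)} {r c : ℕ} : c ∈ maxcolS D r ↔ (r, c) ∈ D := by
  constructor
  · intro h
    obtain ⟨⟨p1, p2⟩, hp, rfl⟩ := Finset.mem_image.mp h
    obtain ⟨hpD, hp1⟩ := Finset.mem_filter.mp hp
    simp only at hp1
    rwa [hp1] at hpD
  · intro h
    exact Finset.mem_image.mpr ⟨(r, c), Finset.mem_filter.mpr ⟨h, rfl⟩, rfl⟩

lemma maxcol_mem {D : Finset (ℕ × ℕ)} {r c : ℕ} (h : (r, c) ∈ D) :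
    (r, maxcol D r) ∈ D := by
  have hne : (maxcolS D r).Nonempty := ⟨c, mem_maxcolS.mpr h⟩
  rw [maxcol, dif_pos hne]
  exact mem_maxcolS.mp ((maxcolS D r).max'_mem hne)

/-- Row of column `c` of `D`. -/
def rowD (D : Finset (ℕ × ℕ)) (c : ℕ) : ℕ :=
  (D.filter (fun q => q.2 = c)).sup Prod.fst

lemma rowD_eq {D : Finset (ℕ × ℕ)}
    (hcol : ∀ r₁ r₂ c, (r₁, c) ∈ D → (r₂, c) ∈ D → r₁ = r₂)
    {r c : ℕ} (h : (r, c) ∈ D) : rowD D c = r := by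
  apply le_antisymm
  · apply Finset.sup_le
    rintro ⟨p1, p2⟩ hp
    obtain ⟨hpD, hp2⟩ := Finset.mem_filter.mp hp
    simp only at hp2
    rw [hp2] at hpD
    exact le_of_eq (hcol p1 r c hpD h)
  · have hmem : (r, c) ∈ D.filter (fun q => q.2 = c) := Finset.mem_filter.mpr ⟨h, rfl⟩
    exact Finset.le_sup (f := Prod.fst) hmem

lemma max'_congr {s t : Finset ℕ} (h : s = t) (hs : s.Nonempty) (ht : t.Nonempty) :
    s.max' hs = t.max' ht := by subst h; rfl

set_option maxHeartbeats 1000000 in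
/-- The step function of the fold defining `dark`. -/
def dstep (D : Finset (ℕ × ℕ)) (acc : Finset (ℕ × ℕ)) (r : ℕ) : Finset (ℕ × ℕ) :=
  if h : ((D.filter (fun p => p.1 = r ∧ ∀ q ∈ acc, q.2 ≠ p.2)).image Prod.snd).Nonempty then
    insert (r, ((D.filter (fun p => p.1 = r ∧ ∀ q ∈ acc, q.2 ≠ p.2)).image Prod.snd).max' h) acc
  else acc

lemma dark_eq_foldl (D : Finset (ℕ × ℕ)) :
    dark D = ((List.range (D.sup Prod.fst + 1)).reverse).foldl (dstep D) ∅ := rfl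

lemma subset_dstep (D acc : Finset (ℕ × ℕ)) (r : ℕ) : acc ⊆ dstep D acc r := by
  rw [dstep]
  split
  · exact Finset.subset_insert _ _
  · exact Finset.Subset.refl _

lemma subset_foldl (D : Finset (ℕ × ℕ)) :
    ∀ (l : List ℕ) (acc : Finset (ℕ × ℕ)), acc ⊆ l.foldl (dstep D) acc
  | [], _ => Finset.Subset.refl _
  | r :: l, acc => (subset_dstep D acc r).trans (subset_foldl D l _)

lemma dstep_subset_D {D acc : Finset (ℕ × ℕ)} (r : ℕ) (h : acc ⊆ D) :
    dstep D acc r ⊆ D := by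
  rw [dstep]
  split
  · rename_i hne
    intro p hp
    rcases Finset.mem_insert.mp hp with hp | hp
    · subst hp
      obtain ⟨⟨q1, q2⟩, hq, hq2⟩ := Finset.mem_image.mp (Finset.max'_mem _ hne)
      obtain ⟨hqD, hq1, -⟩ := Finset.mem_filter.mp hq
      simp only at hq1 hq2
      rwa [hq1, hq2] at hqD
    · exact h hp
  · exact h

lemma dark_main {D : Finset (ℕ × ℕ)}
    (hcol : ∀ r₁ r₂ c, (r₁, c) ∈ D → (r₂, c) ∈ D → r₁ = r₂) :
    ∀ (l : List ℕ) (acc : Finset (ℕ × ℕ)), acc ⊆ D → (∀ q ∈ acc, q.1 ∉ l) →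
      l.Nodup → ∀ r c, r ∈ l → (r, c) ∈ D →
      (r, maxcol D r) ∈ l.foldl (dstep D) acc := by
  intro l
  induction l with
  | nil => intro acc _ _ _ r c hr _; exact absurd hr (List.not_mem_nil (a := r))
  | cons a l ih =>
    intro acc hsub hrows hnd r c hr hrc
    obtain ⟨hal, hndl⟩ := List.nodup_cons.mp hnd
    rw [List.foldl_cons]
    have hsub' : dstep D acc a ⊆ D := dstep_subset_D a hsub
    have hrows' : ∀ q ∈ dstep D acc a, q.1 ∉ l := by
      intro q hq
      rw [dstep] at hq
      split at hq
      · rcases Finset.mem_insert.mp hq with hq | hq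
        · subst hq; exact hal
        · exact fun hl => hrows q hq (List.mem_cons_of_mem a hl)
      · exact fun hl => hrows q hq (List.mem_cons_of_mem a hl)
    rcases List.mem_cons.mp hr with rfl | hr'
    · -- the row r is processed in this step
      have hflt : D.filter (fun p => p.1 = r ∧ ∀ q ∈ acc, q.2 ≠ p.2)
          = D.filter (fun q => q.1 = r) := by
        apply Finset.filter_congr
        rintro ⟨p1, p2⟩ hp
        simp only [eq_iff_iff]
        constructor
        · exact fun h => h.1
        · intro h1
          refine ⟨h1, fun q hq hq2 => ?_⟩
          subst h1
          have hqD := hsub hq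
          have hq' : (q.1, p2) ∈ D := by rw [← hq2]; exact hqD
          have := hcol q.1 p1 p2 hq' hp
          exact hrows q hq (by rw [this]; exact List.mem_cons_self (a := p1) (l := l))
      have hne : (maxcolS D r).Nonempty := ⟨c, mem_maxcolS.mpr hrc⟩
      have hcand : (D.filter (fun p => p.1 = r ∧ ∀ q ∈ acc, q.2 ≠ p.2)).image Prod.snd
          = maxcolS D r := by rw [hflt]; rfl
      have hne' : ((D.filter (fun p => p.1 = r ∧ ∀ q ∈ acc, q.2 ≠ p.2)).image
          Prod.snd).Nonempty := by rw [hcand]; exact hne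
      have hstep : dstep D acc r = insert (r, maxcol D r) acc := by
        rw [dstep, dif_pos hne', maxcol, dif_pos hne]
        exact congrArg (fun x => insert (r, x) acc) (max'_congr hcand hne' hne)
      exact subset_foldl D l _ (hstep ▸ Finset.mem_insert_self _ _)
    · exact ih (dstep D acc a) hsub' hrows' hndl r c hr' hrc

lemma mem_dark {D : Finset (ℕ × ℕ)}
    (hcol : ∀ r₁ r₂ c, (r₁, c) ∈ D → (r₂, c) ∈ D → r₁ = r₂)
    {r c : ℕ} (h : (r, c) ∈ D) : (r, maxcol D r) ∈ dark D := by
  rw [dark_eq_foldl]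
  apply dark_main hcol _ ∅ (Finset.empty_subset _) (by simp) _ r c _ h
  · exact List.nodup_reverse.mpr List.nodup_range
  · rw [List.mem_reverse, List.mem_range]
    exact Nat.lt_succ_of_le (Finset.le_sup (f := Prod.fst) h)

/-- The inductive invariant. -/
def Inv (D : Finset (ℕ × ℕ)) (T : Diagram) : Prop :=
  (∀ p ∈ T.ghosts, p ∈ T.cells) ∧
  (∀ p ∈ T.cells, 1 ≤ p.1 ∧ ∃ r₀, (r₀, p.2) ∈ D ∧ p.1 ≤ r₀) ∧
  (∀ p ∈ T.ghosts, 2 ≤ p.1) ∧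
  (∀ p ∈ T.cells, p ∉ T.ghosts → ∀ q ∈ T.cells, q ∉ T.ghosts → p.2 = q.2 → p = q) ∧
  (∀ r₀ c c', c < c' → (r₀, c) ∈ D → (r₀, c') ∈ D →
    ∀ a b, (a, c') ∈ T.cells → (b, c) ∈ T.cells → a ≤ b) ∧
  (∀ r₀ c c', c < c' → (r₀, c) ∈ D → (r₀, c') ∈ D →
    ∀ a b, (a, c') ∈ T.cells → (b, c) ∈ T.ghosts → a < b)

lemma inv_base (D : Finset (ℕ × ℕ))
    (hpos : ∀ p ∈ D, 1 ≤ p.1 ∧ 1 ≤ p.2)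
    (hcol : ∀ r₁ r₂ c, (r₁, c) ∈ D → (r₂, c) ∈ D → r₁ = r₂) :
    Inv D ⟨D, ∅⟩ := by
  refine ⟨?_, ?_, ?_, ?_, ?_, ?_⟩
  · intro p hp; exact absurd hp (Finset.notMem_empty p)
  · rintro ⟨p1, p2⟩ hp
    exact ⟨(hpos _ hp).1, p1, hp, le_rfl⟩
  · intro p hp; exact absurd hp (Finset.notMem_empty p)
  · rintro ⟨p1, p2⟩ hp - ⟨q1, q2⟩ hq - h
    simp only at h
    subst h
    rw [hcol p1 q1 p2 hp hq]
  · intro r₀ c c' _ _ hD2 a b ha hb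
    rw [hcol a r₀ c' ha hD2]
    rw [hcol b r₀ c hb ‹(r₀, c) ∈ D›]
  · intro r₀ c c' _ _ _ a b _ hb
    exact absurd hb (Finset.notMem_empty _)

lemma inv_step {D : Finset (ℕ × ℕ)}
    (hcol : ∀ r₁ r₂ c, (r₁, c) ∈ D → (r₂, c) ∈ D → r₁ = r₂)
    {T T' : Diagram} (hI : Inv D T) (hs : KStep T T') : Inv D T' := by
  obtain ⟨r, c, rhat, ⟨⟨hrc, hno⟩, hng, h1r, hlt, hemp, hbet⟩, hT'⟩ := hs
  obtain ⟨i1, i2, i3, i4, i5, i6⟩ := hI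
  -- every move drops by exactly one row
  have hr1 : rhat + 1 = r := by
    by_contra h
    have h2 : rhat + 1 < r := lt_of_le_of_ne hlt h
    have hb := hbet (rhat + 1) (Nat.lt_succ_self _) h2
    have heq := i4 _ hb.1 hb.2 _ hrc hng rfl
    exact h (congrArg Prod.fst heq)
  obtain ⟨-, r₀c, hr₀cD, hrler₀⟩ := i2 _ hrc
  rcases hT' with rfl | rfl
  · -- Kohnert move
    refine ⟨?_, ?_, ?_, ?_, ?_, ?_⟩
    · -- ghosts ⊆ cells
      intro p hp
      simp only [applyKohnert] at *
      exact Finset.mem_insert_of_mem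
        (Finset.mem_erase.mpr ⟨fun h => hng (h ▸ hp), i1 p hp⟩)
    · -- position bounds
      intro p hp
      simp only [applyKohnert] at hp
      rcases Finset.mem_insert.mp hp with rfl | hp
      · exact ⟨h1r, r₀c, hr₀cD, le_trans (le_of_lt hlt) hrler₀⟩
      · exact i2 p (Finset.mem_of_mem_erase hp)
    · -- ghost rows ≥ 2
      intro p hp; exact i3 p hp
    · -- unique nonghost per column
      intro p hp hpg q hq hqg hpq
      simp only [applyKohnert] at hp hq hpg hqg
      rcases Finset.mem_insert.mp hp with rfl | hp <;>
        rcases Finset.mem_insert.mp hq with rfl | hq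
      · rfl
      · exfalso
        obtain ⟨hqne, hqc⟩ := Finset.mem_erase.mp hq
        exact hqne (i4 q hqc hqg _ hrc hng (by rw [← hpq]))
      · exfalso
        obtain ⟨hpne, hpc⟩ := Finset.mem_erase.mp hp
        exact hpne (i4 p hpc hpg _ hrc hng (by rw [hpq]))
      · exact i4 p (Finset.mem_of_mem_erase hp) hpg q (Finset.mem_of_mem_erase hq) hqg hpq
    · -- M : right same-group columns weakly below
      intro r₀ c₁ c₂ h12 hD1 hD2 a b ha hb
      simp only [applyKohnert] at ha hb
      rcases Finset.mem_insert.mp ha with ha | ha <;>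
        rcases Finset.mem_insert.mp hb with hb | hb
      · obtain ⟨ha1, -⟩ := (Prod.mk.injEq _ _ _ _).mp ha
        obtain ⟨hb1, -⟩ := (Prod.mk.injEq _ _ _ _).mp hb
        omega
      · obtain ⟨ha1, ha2⟩ := (Prod.mk.injEq _ _ _ _).mp ha
        have hrc2 : (r, c₂) ∈ T.cells := by rw [ha2]; exact hrc
        have := i5 r₀ c₁ c₂ h12 hD1 hD2 r b hrc2 (Finset.mem_of_mem_erase hb)
        omega
      · obtain ⟨hb1, hb2⟩ := (Prod.mk.injEq _ _ _ _).mp hb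
        have hrc1 : (r, c₁) ∈ T.cells := by rw [hb2]; exact hrc
        have hale := i5 r₀ c₁ c₂ h12 hD1 hD2 a r (Finset.mem_of_mem_erase ha) hrc1
        have h12' : c < c₂ := by rw [← hb2]; exact h12
        have hane : a ≠ r := by
          rintro rfl
          exact hno c₂ h12' (Finset.mem_of_mem_erase ha)
        omega
      · exact i5 r₀ c₁ c₂ h12 hD1 hD2 a b (Finset.mem_of_mem_erase ha)
          (Finset.mem_of_mem_erase hb)
    · -- N : strictly below left ghosts
      intro r₀ c₁ c₂ h12 hD1 hD2 a b ha hb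
      simp only [applyKohnert] at ha hb
      rcases Finset.mem_insert.mp ha with ha | ha
      · obtain ⟨ha1, ha2⟩ := (Prod.mk.injEq _ _ _ _).mp ha
        have hrc2 : (r, c₂) ∈ T.cells := by rw [ha2]; exact hrc
        have := i6 r₀ c₁ c₂ h12 hD1 hD2 r b hrc2 hb
        omega
      · exact i6 r₀ c₁ c₂ h12 hD1 hD2 a b (Finset.mem_of_mem_erase ha) hb
  · -- ghost move
    refine ⟨?_, ?_, ?_, ?_, ?_, ?_⟩
    · intro p hp
      simp only [applyGhost] at *
      rcases Finset.mem_insert.mp hp with rfl | hp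
      · exact Finset.mem_insert_of_mem hrc
      · exact Finset.mem_insert_of_mem (i1 p hp)
    · intro p hp
      simp only [applyGhost] at hp
      rcases Finset.mem_insert.mp hp with rfl | hp
      · exact ⟨h1r, r₀c, hr₀cD, le_trans (le_of_lt hlt) hrler₀⟩
      · exact i2 p hp
    · intro p hp
      simp only [applyGhost] at hp
      rcases Finset.mem_insert.mp hp with rfl | hp
      · omega
      · exact i3 p hp
    · intro p hp hpg q hq hqg hpq
      simp only [applyGhost] at hp hq hpg hqg
      have hpg' : p ≠ (r, c) ∧ p ∉ T.ghosts := by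
        constructor
        · rintro rfl; exact hpg (Finset.mem_insert_self _ _)
        · intro h; exact hpg (Finset.mem_insert_of_mem h)
      have hqg' : q ≠ (r, c) ∧ q ∉ T.ghosts := by
        constructor
        · rintro rfl; exact hqg (Finset.mem_insert_self _ _)
        · intro h; exact hqg (Finset.mem_insert_of_mem h)
      rcases Finset.mem_insert.mp hp with rfl | hp <;>
        rcases Finset.mem_insert.mp hq with rfl | hq
      · rfl
      · exact absurd (i4 q hq hqg'.2 _ hrc hng (by rw [← hpq])) hqg'.1
      · exact absurd (i4 p hp hpg'.2 _ hrc hng (by rw [hpq])) hpg'.1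
      · exact i4 p hp hpg'.2 q hq hqg'.2 hpq
    · intro r₀ c₁ c₂ h12 hD1 hD2 a b ha hb
      simp only [applyGhost] at ha hb
      rcases Finset.mem_insert.mp ha with ha | ha <;>
        rcases Finset.mem_insert.mp hb with hb | hb
      · obtain ⟨ha1, -⟩ := (Prod.mk.injEq _ _ _ _).mp ha
        obtain ⟨hb1, -⟩ := (Prod.mk.injEq _ _ _ _).mp hb
        omega
      · obtain ⟨ha1, ha2⟩ := (Prod.mk.injEq _ _ _ _).mp ha
        have hrc2 : (r, c₂) ∈ T.cells := by rw [ha2]; exact hrc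
        have := i5 r₀ c₁ c₂ h12 hD1 hD2 r b hrc2 hb
        omega
      · obtain ⟨hb1, hb2⟩ := (Prod.mk.injEq _ _ _ _).mp hb
        have hrc1 : (r, c₁) ∈ T.cells := by rw [hb2]; exact hrc
        have hale := i5 r₀ c₁ c₂ h12 hD1 hD2 a r ha hrc1
        have h12' : c < c₂ := by rw [← hb2]; exact h12
        have hane : a ≠ r := by
          rintro rfl
          exact hno c₂ h12' ha
        omega
      · exact i5 r₀ c₁ c₂ h12 hD1 hD2 a b ha hb
    · intro r₀ c₁ c₂ h12 hD1 hD2 a b ha hb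
      simp only [applyGhost] at ha hb
      rcases Finset.mem_insert.mp hb with hb | hb
      · -- the new ghost (r,c) plays the left role
        obtain ⟨hb1, hb2⟩ := (Prod.mk.injEq _ _ _ _).mp hb
        rcases Finset.mem_insert.mp ha with ha | ha
        · obtain ⟨-, ha2⟩ := (Prod.mk.injEq _ _ _ _).mp ha
          omega
        · have hrc1 : (r, c₁) ∈ T.cells := by rw [hb2]; exact hrc
          have hale := i5 r₀ c₁ c₂ h12 hD1 hD2 a r ha hrc1
          have h12' : c < c₂ := by rw [← hb2]; exact h12
          have hane : a ≠ r := by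
            rintro rfl
            exact hno c₂ h12' ha
          omega
      · rcases Finset.mem_insert.mp ha with ha | ha
        · obtain ⟨ha1, ha2⟩ := (Prod.mk.injEq _ _ _ _).mp ha
          have hrc2 : (r, c₂) ∈ T.cells := by rw [ha2]; exact hrc
          have := i6 r₀ c₁ c₂ h12 hD1 hD2 r b hrc2 hb
          omega
        · exact i6 r₀ c₁ c₂ h12 hD1 hD2 a b ha hb

lemma inv_reach (D : Finset (ℕ × ℕ))
    (hpos : ∀ p ∈ D, 1 ≤ p.1 ∧ 1 ≤ p.2)
    (hcol : ∀ r₁ r₂ c, (r₁, c) ∈ D → (r₂, c) ∈ D → r₁ = r₂) :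
    ∀ T, Relation.ReflTransGen KStep ⟨D, ∅⟩ T → Inv D T := by
  intro T h
  induction h with
  | refl => exact inv_base D hpos hcol
  | tail _ hstep ih => exact inv_step hcol ih hstep

lemma ghosts_card_le_sf (D : Finset (ℕ × ℕ))
    (hcol : ∀ r₁ r₂ c, (r₁, c) ∈ D → (r₂, c) ∈ D → r₁ = r₂)
    {T : Diagram} (hI : Inv D T) : T.ghosts.card ≤ sf D := by
  obtain ⟨i1, i2, i3, i4, i5, i6⟩ := hI
  rw [sf]
  apply Finset.card_le_card_of_injOn (fun p => (p.1 - 1, maxcol D (rowD D p.2)))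
  · rintro ⟨r, c⟩ hp
    have hcell := i1 _ hp
    obtain ⟨-, r₀, hr₀D, hrle⟩ := i2 _ hcell
    have h2r : 2 ≤ r := i3 _ hp
    have hrow : rowD D c = r₀ := rowD_eq hcol hr₀D
    have hmc : (r₀, maxcol D r₀) ∈ D := maxcol_mem hr₀D
    have hsup : r₀ ≤ D.sup Prod.fst := Finset.le_sup (f := Prod.fst) hr₀D
    simp only [hrow]
    rw [Finset.mem_coe, snowflakes, Finset.mem_filter, Finset.mem_product]
    refine ⟨⟨Finset.mem_range.mpr (by omega), Finset.mem_image.mpr ⟨_, hmc, rfl⟩⟩,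
      by omega, ?_, ⟨(r₀, maxcol D r₀), mem_dark hcol hmc, rfl, by omega⟩⟩
    intro hmem
    have := hcol (r - 1) r₀ (maxcol D r₀) hmem hmc
    omega
  · rintro ⟨r, c⟩ hp ⟨r', c'⟩ hq heq
    simp only [Finset.mem_coe] at hp hq
    obtain ⟨h1, h2⟩ := (Prod.mk.injEq _ _ _ _).mp heq
    have h2r : 2 ≤ r := i3 _ hp
    have h2r' : 2 ≤ r' := i3 _ hq
    have hrr : r = r' := by omega
    subst hrr
    obtain ⟨-, r₀, hr₀D, hrle⟩ := i2 _ (i1 _ hp)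
    obtain ⟨-, r₀', hr₀D', hrle'⟩ := i2 _ (i1 _ hq)
    rw [rowD_eq hcol hr₀D, rowD_eq hcol hr₀D'] at h2
    have hmc : (r₀, maxcol D r₀) ∈ D := maxcol_mem hr₀D
    have hmc' : (r₀', maxcol D r₀') ∈ D := maxcol_mem hr₀D'
    rw [h2] at hmc
    have hr₀eq : r₀ = r₀' := hcol r₀ r₀' _ hmc hmc'
    subst hr₀eq
    have hcc : c = c' := by
      rcases lt_trichotomy c c' with h | h | h
      · exact absurd (i6 r₀ c c' h hr₀D hr₀D' r r (i1 _ hq) hp) (lt_irrefl r)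
      · exact h
      · exact absurd (i6 r₀ c' c h hr₀D' hr₀D r r (i1 _ hp) hq) (lt_irrefl r)
    rw [hcc]

end Stmt8

theorem maxG_le_sf_of_single_cell_columns_AUX (D : Finset (ℕ × ℕ))
    (hpos : ∀ p ∈ D, 1 ≤ p.1 ∧ 1 ≤ p.2)
    (hcol : ∀ r₁ r₂ c, (r₁, c) ∈ D → (r₂, c) ∈ D → r₁ = r₂) :
    MaxG ⟨D, ∅⟩ ≤ sf D := by
  rw [MaxG]
  apply csSup_le
  · exact ⟨0, ⟨D, ∅⟩, Relation.ReflTransGen.refl, rfl⟩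
  · rintro n ⟨T, hT, rfl⟩
    exact Stmt8.ghosts_card_le_sf D hcol (Stmt8.inv_reach D hpos hcol T hT)


/-- If every column of a ghost-free diagram D contains at most one
cell, then MaxG(D) ≤ sf(D). -/
theorem maxG_le_sf_of_single_cell_columns (D : Finset (ℕ × ℕ))
    (hpos : ∀ p ∈ D, 1 ≤ p.1 ∧ 1 ≤ p.2)
    (hcol : ∀ r₁ r₂ c, (r₁, c) ∈ D → (r₂, c) ∈ D → r₁ = r₂) :
    MaxG ⟨D, ∅⟩ ≤ sf D :=
  maxG_le_sf_of_single_cell_columns_AUX D hpos hcol
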